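/- Assume μ1 < μ2 and −1 < ρ < ρ̂1, and set (t_A, s_A) = ((1−2ρ)/μ1, 1/(μ2 − 2μ1·ρ)), h(ρ) = μ2 − 2(μ1+μ2)·ρ + 3μ1·ρ², a1 = 2μ1³(μ2−2μ1ρ)/h(ρ), a2 = −2ρ·μ1²·(μ2−2μ1ρ)²/h(ρ), a3 = 2(μ2−2μ1ρ)⁴(1−2ρ)/h(ρ). Then h(ρ) > 0, a1 > 0, a3 > 0, and as (t,s) → (0,0) one has the second-order expansion g(t_A + t, s_A + s) = 4(μ2 + (1−2ρ)·μ1) + (a1/2)·t² − a2·t·s + (a3/2)·s² + o(t² + s²). -/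

import Mathlib

set_option maxHeartbeats 4000000

open Matrix

/-- Covariance matrix `Σ_{ts}` of `(X₁(t), X₂(s))` for a correlated Brownian motion with
correlation `ρ`. -/
noncomputable def covM (ρ t s : ℝ) : Matrix (Fin 2) (Fin 2) ℝ :=
  !![t, ρ * min t s; ρ * min t s, s]

/-- `g(t,s) = inf { (x,y) Σ_{ts}⁻¹ (x,y)ᵀ : x ≥ 1 + μ₁ t, y ≥ 1 + μ₂ s }`. -/
noncomputable def gfun (ρ μ1 μ2 t s : ℝ) : ℝ :=
  sInf {v : ℝ | ∃ x y : ℝ, 1 + μ1 * t ≤ x ∧ 1 + μ2 * s ≤ y ∧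
    v = ![x, y] ⬝ᵥ ((covM ρ t s)⁻¹ *ᵥ ![x, y])}

open Asymptotics Filter

/-- In the region `0 < s < t` where the KKT conditions hold at the corner,
`gfun` is given by the explicit quadratic-form value at the corner. -/
lemma gfun_eq (ρ μ1 μ2 t s : ℝ) (hs : 0 < s) (hst : s < t) (hρ : ρ^2 < 1)
    (hk1 : 0 ≤ (1 + μ1*t) - ρ*(1 + μ2*s))
    (hk2 : 0 ≤ t*(1 + μ2*s) - ρ*s*(1 + μ1*t)) :
    gfun ρ μ1 μ2 t s =
      (s*(1 + μ1*t)^2 - 2*ρ*s*(1 + μ1*t)*(1 + μ2*s) + t*(1 + μ2*s)^2) / (s*(t - ρ^2*s)) := by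
  have hts : 0 < t - ρ^2*s := by nlinarith
  have hden : 0 < s*(t - ρ^2*s) := mul_pos hs hts
  have hq : ∀ x y : ℝ, ![x, y] ⬝ᵥ ((covM ρ t s)⁻¹ *ᵥ ![x, y]) =
      (s*x^2 - 2*ρ*s*x*y + t*y^2) / (s*(t - ρ^2*s)) := by
    intro x y
    have hmin : min t s = s := min_eq_right hst.le
    have hA : (covM ρ t s)⁻¹ = (t*s - ρ*s*(ρ*s))⁻¹ • !![s, -(ρ*s); -(ρ*s), t] := by
      rw [covM, hmin, Matrix.inv_def, Matrix.adjugate_fin_two_of, Matrix.det_fin_two_of,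
        Ring.inverse_eq_inv]
    rw [hA]
    simp [Matrix.mulVec, dotProduct, Fin.sum_univ_two]
    rw [show t*s - ρ*s*(ρ*s) = s*(t - ρ^2*s) by ring]
    field_simp; ring
  have hlb : ∀ z ∈ {v : ℝ | ∃ x y : ℝ, 1 + μ1 * t ≤ x ∧ 1 + μ2 * s ≤ y ∧
      v = ![x, y] ⬝ᵥ ((covM ρ t s)⁻¹ *ᵥ ![x, y])},
      (s*(1 + μ1*t)^2 - 2*ρ*s*(1 + μ1*t)*(1 + μ2*s) + t*(1 + μ2*s)^2) / (s*(t - ρ^2*s)) ≤ z := by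
    rintro z ⟨x, y, hx, hy, rfl⟩
    rw [hq]
    rw [div_le_div_iff₀ hden hden]
    have h1 : 0 ≤ (x - (1 + μ1*t)) * ((1 + μ1*t) - ρ*(1 + μ2*s)) :=
      mul_nonneg (by linarith) hk1
    have h2 : 0 ≤ (y - (1 + μ2*s)) * (t*(1 + μ2*s) - ρ*s*(1 + μ1*t)) :=
      mul_nonneg (by linarith) hk2
    have h3 : 0 ≤ (s*(x - (1 + μ1*t)) - ρ*s*(y - (1 + μ2*s)))^2 := sq_nonneg _
    have h4 : 0 ≤ s*(t - ρ^2*s)*(y - (1 + μ2*s))^2 :=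
      mul_nonneg hden.le (sq_nonneg _)
    nlinarith [mul_nonneg (mul_nonneg hs.le hs.le) h1, mul_nonneg hs.le h2,
      mul_pos hs hden, mul_nonneg hden.le h3, mul_nonneg hden.le h4, sq_nonneg s]
  have hmem : (s*(1 + μ1*t)^2 - 2*ρ*s*(1 + μ1*t)*(1 + μ2*s) + t*(1 + μ2*s)^2) / (s*(t - ρ^2*s))
      ∈ {v : ℝ | ∃ x y : ℝ, 1 + μ1 * t ≤ x ∧ 1 + μ2 * s ≤ y ∧
      v = ![x, y] ⬝ᵥ ((covM ρ t s)⁻¹ *ᵥ ![x, y])} :=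
    ⟨1 + μ1*t, 1 + μ2*s, le_refl _, le_refl _, (hq _ _).symm⟩
  exact le_antisymm (csInf_le ⟨_, hlb⟩ hmem) (le_csInf ⟨_, hmem⟩ hlb)

lemma helper_o {c q : ℝ × ℝ → ℝ} (hc : Filter.Tendsto c (nhds ((0:ℝ),(0:ℝ))) (nhds 0))
    (hq : ∀ p : ℝ × ℝ, |q p| ≤ p.1^2 + p.2^2) :
    (fun p => c p * q p) =o[nhds ((0:ℝ),(0:ℝ))] (fun p : ℝ × ℝ => p.1^2 + p.2^2) := by
  have h1 : c =o[nhds ((0:ℝ),(0:ℝ))] (fun _ => (1:ℝ)) := (isLittleO_one_iff ℝ).mpr hc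
  have h2 : q =O[nhds ((0:ℝ),(0:ℝ))] (fun p : ℝ × ℝ => p.1^2 + p.2^2) := by
    apply isBigO_of_le
    intro p
    have h0 : (0:ℝ) ≤ p.1^2 + p.2^2 := by positivity
    simpa [abs_of_nonneg h0] using hq p
  simpa using h1.mul_isBigO h2

lemma tend1 : Filter.Tendsto (fun p : ℝ × ℝ => p.1) (nhds ((0:ℝ),(0:ℝ))) (nhds 0) :=
  continuous_fst.tendsto _

lemma tend2 : Filter.Tendsto (fun p : ℝ × ℝ => p.2) (nhds ((0:ℝ),(0:ℝ))) (nhds 0) :=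
  continuous_snd.tendsto _

lemma sum_o (c30 c21 c12 c03 c40 c31 c22 c13 c04 : ℝ) :
    (fun p : ℝ × ℝ => c30*p.1^3 + c21*p.1^2*p.2 + c12*p.1*p.2^2 + c03*p.2^3
        + c40*p.1^4 + c31*p.1^3*p.2 + c22*p.1^2*p.2^2 + c13*p.1*p.2^3 + c04*p.2^4)
      =o[nhds ((0:ℝ),(0:ℝ))] (fun p : ℝ × ℝ => p.1^2 + p.2^2) := by
  have b1 : ∀ p : ℝ × ℝ, |p.1^2| ≤ p.1^2 + p.2^2 := by
    intro p; rw [abs_of_nonneg (by positivity)]; nlinarith [sq_nonneg p.2]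
  have b2 : ∀ p : ℝ × ℝ, |p.2^2| ≤ p.1^2 + p.2^2 := by
    intro p; rw [abs_of_nonneg (by positivity)]; nlinarith [sq_nonneg p.1]
  have t1 := tend1; have t2 := tend2
  have t11 : Filter.Tendsto (fun p : ℝ × ℝ => p.1*p.2) (nhds ((0:ℝ),(0:ℝ))) (nhds 0) := by
    simpa using t1.mul t2
  have t1sq : Filter.Tendsto (fun p : ℝ × ℝ => p.1^2) (nhds ((0:ℝ),(0:ℝ))) (nhds 0) := by
    have := t1.mul t1; simpa [pow_two] using this
  have t2sq : Filter.Tendsto (fun p : ℝ × ℝ => p.2^2) (nhds ((0:ℝ),(0:ℝ))) (nhds 0) := by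
    have := t2.mul t2; simpa [pow_two] using this
  have m30 : (fun p : ℝ × ℝ => p.1^3) =o[nhds ((0:ℝ),(0:ℝ))] (fun p : ℝ × ℝ => p.1^2 + p.2^2) :=
    (helper_o t1 b1).congr (fun p => by ring) (fun p => rfl)
  have m21 : (fun p : ℝ × ℝ => p.1^2*p.2) =o[nhds ((0:ℝ),(0:ℝ))] (fun p : ℝ × ℝ => p.1^2 + p.2^2) :=
    (helper_o t2 b1).congr (fun p => by ring) (fun p => rfl)
  have m12 : (fun p : ℝ × ℝ => p.1*p.2^2) =o[nhds ((0:ℝ),(0:ℝ))] (fun p : ℝ × ℝ => p.1^2 + p.2^2) :=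
    (helper_o t1 b2).congr (fun p => by ring) (fun p => rfl)
  have m03 : (fun p : ℝ × ℝ => p.2^3) =o[nhds ((0:ℝ),(0:ℝ))] (fun p : ℝ × ℝ => p.1^2 + p.2^2) :=
    (helper_o t2 b2).congr (fun p => by ring) (fun p => rfl)
  have m40 : (fun p : ℝ × ℝ => p.1^4) =o[nhds ((0:ℝ),(0:ℝ))] (fun p : ℝ × ℝ => p.1^2 + p.2^2) :=
    (helper_o t1sq b1).congr (fun p => by ring) (fun p => rfl)
  have m31 : (fun p : ℝ × ℝ => p.1^3*p.2) =o[nhds ((0:ℝ),(0:ℝ))] (fun p : ℝ × ℝ => p.1^2 + p.2^2) :=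
    (helper_o t11 b1).congr (fun p => by ring) (fun p => rfl)
  have m22 : (fun p : ℝ × ℝ => p.1^2*p.2^2) =o[nhds ((0:ℝ),(0:ℝ))] (fun p : ℝ × ℝ => p.1^2 + p.2^2) :=
    (helper_o t1sq b2).congr (fun p => by ring) (fun p => rfl)
  have m13 : (fun p : ℝ × ℝ => p.1*p.2^3) =o[nhds ((0:ℝ),(0:ℝ))] (fun p : ℝ × ℝ => p.1^2 + p.2^2) :=
    (helper_o t11 b2).congr (fun p => by ring) (fun p => rfl)
  have m04 : (fun p : ℝ × ℝ => p.2^4) =o[nhds ((0:ℝ),(0:ℝ))] (fun p : ℝ × ℝ => p.1^2 + p.2^2) :=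
    (helper_o t2sq b2).congr (fun p => by ring) (fun p => rfl)
  have := ((((((((m30.const_mul_left c30).add (m21.const_mul_left c21)).add
    (m12.const_mul_left c12)).add (m03.const_mul_left c03)).add
    (m40.const_mul_left c40)).add (m31.const_mul_left c31)).add
    (m22.const_mul_left c22)).add (m13.const_mul_left c13)).add (m04.const_mul_left c04)
  exact this.congr (fun p => by ring) (fun p => rfl)

/-- The core polynomial identity (denominators cleared). -/
lemma core_ident (ρ μ1 μ2 : ℝ) (p : ℝ × ℝ) (hμ1 : μ1 ≠ 0)
    (hw : μ2 - 2*μ1*ρ ≠ 0) (hh : μ2 - 2*(μ1+μ2)*ρ + 3*μ1*ρ^2 ≠ 0) :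
    ((1 / (μ2 - 2 * μ1 * ρ) + p.2) * (1 + μ1 * ((1 - 2 * ρ) / μ1 + p.1)) ^ 2 -
      2 * ρ * (1 / (μ2 - 2 * μ1 * ρ) + p.2) * (1 + μ1 * ((1 - 2 * ρ) / μ1 + p.1)) *
        (1 + μ2 * (1 / (μ2 - 2 * μ1 * ρ) + p.2)) +
      ((1 - 2 * ρ) / μ1 + p.1) * (1 + μ2 * (1 / (μ2 - 2 * μ1 * ρ) + p.2)) ^ 2)
    - ((1 / (μ2 - 2 * μ1 * ρ) + p.2) * ((1 - 2 * ρ) / μ1 + p.1 - ρ ^ 2 * (1 / (μ2 - 2 * μ1 * ρ) + p.2))) *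
      (4 * (μ2 + (1 - 2 * ρ) * μ1) +
              2 * μ1 ^ 3 * (μ2 - 2 * μ1 * ρ) /
                  (μ2 - 2 * (μ1 + μ2) * ρ + 3 * μ1 * ρ ^ 2) / 2 * p.1 ^ 2 -
              -2 * ρ * μ1 ^ 2 * (μ2 - 2 * μ1 * ρ) ^ 2 /
                  (μ2 - 2 * (μ1 + μ2) * ρ + 3 * μ1 * ρ ^ 2) * p.1 * p.2 +
              2 * (μ2 - 2 * μ1 * ρ) ^ 4 * (1 - 2 * ρ) /
                  (μ2 - 2 * (μ1 + μ2) * ρ + 3 * μ1 * ρ ^ 2) / 2 * p.2 ^ 2)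
    = ((((-1)*μ1^4*μ2^2 + (4)*μ1^5*μ2*ρ + (-4)*μ1^6*ρ^2)/(μ1*(μ2 - 2*μ1*ρ)^2*(μ2 - 2*(μ1+μ2)*ρ + 3*μ1*ρ^2)))*p.1^3 + (((-2)*μ1^3*μ2^3*ρ + (13)*μ1^4*μ2^2*ρ^2 + (-28)*μ1^5*μ2*ρ^3 + (20)*μ1^6*ρ^4)/(μ1*(μ2 - 2*μ1*ρ)^2*(μ2 - 2*(μ1+μ2)*ρ + 3*μ1*ρ^2)))*p.1^2*p.2 + (((-1)*μ1^2*μ2^4*ρ^2 + (10)*μ1^3*μ2^3*ρ^3 + (-36)*μ1^4*μ2^2*ρ^4 + (56)*μ1^5*μ2*ρ^5 + (-32)*μ1^6*ρ^6)/(μ1*(μ2 - 2*μ1*ρ)^2*(μ2 - 2*(μ1+μ2)*ρ + 3*μ1*ρ^2)))*p.1*p.2^2 + (((-1)*μ2^6 + (4)*μ2^6*ρ + (-4)*μ2^6*ρ^2 + (12)*μ1*μ2^5*ρ + (-46)*μ1*μ2^5*ρ^2 + (44)*μ1*μ2^5*ρ^3 + (-60)*μ1^2*μ2^4*ρ^2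 + (220)*μ1^2*μ2^4*ρ^3 + (-200)*μ1^2*μ2^4*ρ^4 + (160)*μ1^3*μ2^3*ρ^3 + (-560)*μ1^3*μ2^3*ρ^4 + (480)*μ1^3*μ2^3*ρ^5 + (-240)*μ1^4*μ2^2*ρ^4 + (800)*μ1^4*μ2^2*ρ^5 + (-640)*μ1^4*μ2^2*ρ^6 + (192)*μ1^5*μ2*ρ^5 + (-608)*μ1^5*μ2*ρ^6 + (448)*μ1^5*μ2*ρ^7 + (-64)*μ1^6*ρ^6 + (192)*μ1^6*ρ^7 + (-128)*μ1^6*ρ^8)/(μ1*(μ2 - 2*μ1*ρ)^2*(μ2 - 2*(μ1+μ2)*ρ + 3*μ1*ρ^2)))*p.2^3 + (((0:ℝ))/(μ1*(μ2 - 2*μ1*ρ)^2*(μ2 - 2*(μ1+μ2)*ρ + 3*μ1*ρ^2)))*p.1^4 + (((-1)*μ1^4*μ2^3 + (6)*μ1^5*μ2^2*ρ + (-12)*μ1^6*μ2*ρ^2 + (8)*μ1^7*ρ^3)/(μ1*(μ2 - 2*μ1*ρ)^2*(μ2 - 2*(μ1+μ2)*ρ + 3*μ1*ρ^2)))*p.1^3*p.2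 + (((-2)*μ1^3*μ2^4*ρ + (17)*μ1^4*μ2^3*ρ^2 + (-54)*μ1^5*μ2^2*ρ^3 + (76)*μ1^6*μ2*ρ^4 + (-40)*μ1^7*ρ^5)/(μ1*(μ2 - 2*μ1*ρ)^2*(μ2 - 2*(μ1+μ2)*ρ + 3*μ1*ρ^2)))*p.1^2*p.2^2 + (((-1)*μ1*μ2^6 + (2)*μ1*μ2^6*ρ + (12)*μ1^2*μ2^5*ρ + (-24)*μ1^2*μ2^5*ρ^2 + (-60)*μ1^3*μ2^4*ρ^2 + (122)*μ1^3*μ2^4*ρ^3 + (160)*μ1^4*μ2^3*ρ^3 + (-336)*μ1^4*μ2^3*ρ^4 + (-240)*μ1^5*μ2^2*ρ^4 + (528)*μ1^5*μ2^2*ρ^5 + (192)*μ1^6*μ2*ρ^5 + (-448)*μ1^6*μ2*ρ^6 + (-64)*μ1^7*ρ^6 + (160)*μ1^7*ρ^7)/(μ1*(μ2 - 2*μ1*ρ)^2*(μ2 - 2*(μ1+μ2)*ρ + 3*μ1*ρ^2)))*p.1*p.2^3 + (((1)*μ1*μ2^6*ρ^2 + (-2)*μ1*μ2^6*ρ^3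 + (-12)*μ1^2*μ2^5*ρ^3 + (24)*μ1^2*μ2^5*ρ^4 + (60)*μ1^3*μ2^4*ρ^4 + (-120)*μ1^3*μ2^4*ρ^5 + (-160)*μ1^4*μ2^3*ρ^5 + (320)*μ1^4*μ2^3*ρ^6 + (240)*μ1^5*μ2^2*ρ^6 + (-480)*μ1^5*μ2^2*ρ^7 + (-192)*μ1^6*μ2*ρ^7 + (384)*μ1^6*μ2*ρ^8 + (64)*μ1^7*ρ^8 + (-128)*μ1^7*ρ^9)/(μ1*(μ2 - 2*μ1*ρ)^2*(μ2 - 2*(μ1+μ2)*ρ + 3*μ1*ρ^2)))*p.2^4) := by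
  generalize hH : μ2 - 2 * (μ1 + μ2) * ρ + 3 * μ1 * ρ ^ 2 = H at hh ⊢
  generalize hW : μ2 - 2 * μ1 * ρ = W at hw ⊢
  field_simp
  subst hH hW
  ring

theorem statement16 (ρ μ1 μ2 : ℝ) (hρl : -1 < ρ)
    (hρu : ρ < (μ1 + μ2 - Real.sqrt ((μ1 + μ2) ^ 2 - 4 * μ1 * (μ2 - μ1))) / (4 * μ1))
    (hμ1 : 0 < μ1) (hμ12 : μ1 < μ2) :
    0 < μ2 - 2 * (μ1 + μ2) * ρ + 3 * μ1 * ρ ^ 2 ∧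
      0 < 2 * μ1 ^ 3 * (μ2 - 2 * μ1 * ρ) / (μ2 - 2 * (μ1 + μ2) * ρ + 3 * μ1 * ρ ^ 2) ∧
      0 < 2 * (μ2 - 2 * μ1 * ρ) ^ 4 * (1 - 2 * ρ) /
          (μ2 - 2 * (μ1 + μ2) * ρ + 3 * μ1 * ρ ^ 2) ∧
      (fun p : ℝ × ℝ =>
          gfun ρ μ1 μ2 ((1 - 2 * ρ) / μ1 + p.1) (1 / (μ2 - 2 * μ1 * ρ) + p.2) -
            (4 * (μ2 + (1 - 2 * ρ) * μ1) +
              2 * μ1 ^ 3 * (μ2 - 2 * μ1 * ρ) /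
                  (μ2 - 2 * (μ1 + μ2) * ρ + 3 * μ1 * ρ ^ 2) / 2 * p.1 ^ 2 -
              -2 * ρ * μ1 ^ 2 * (μ2 - 2 * μ1 * ρ) ^ 2 /
                  (μ2 - 2 * (μ1 + μ2) * ρ + 3 * μ1 * ρ ^ 2) * p.1 * p.2 +
              2 * (μ2 - 2 * μ1 * ρ) ^ 4 * (1 - 2 * ρ) /
                  (μ2 - 2 * (μ1 + μ2) * ρ + 3 * μ1 * ρ ^ 2) / 2 * p.2 ^ 2)) =o[nhds (0, 0)]
        (fun p : ℝ × ℝ => p.1 ^ 2 + p.2 ^ 2) := by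
  have hd0 : (0:ℝ) ≤ (μ1 + μ2) ^ 2 - 4 * μ1 * (μ2 - μ1) := by nlinarith [sq_nonneg (μ2 - μ1), sq_nonneg μ1]
  have hsq : Real.sqrt ((μ1 + μ2) ^ 2 - 4 * μ1 * (μ2 - μ1)) ^ 2
      = (μ1 + μ2) ^ 2 - 4 * μ1 * (μ2 - μ1) := Real.sq_sqrt hd0
  have hsnn : 0 ≤ Real.sqrt ((μ1 + μ2) ^ 2 - 4 * μ1 * (μ2 - μ1)) := Real.sqrt_nonneg _
  have h4m : 4*μ1*ρ < μ1 + μ2 - Real.sqrt ((μ1 + μ2) ^ 2 - 4 * μ1 * (μ2 - μ1)) := by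
    rw [lt_div_iff₀ (by positivity : (0:ℝ) < 4*μ1)] at hρu
    linarith
  have hqpos : 0 < 4*μ1*ρ^2 - 2*(μ1+μ2)*ρ + (μ2 - μ1) := by
    have ha : 0 < μ1 + μ2 - 4*μ1*ρ - Real.sqrt ((μ1 + μ2) ^ 2 - 4 * μ1 * (μ2 - μ1)) := by linarith
    have hb : 0 < μ1 + μ2 - 4*μ1*ρ + Real.sqrt ((μ1 + μ2) ^ 2 - 4 * μ1 * (μ2 - μ1)) := by linarith
    nlinarith [mul_pos ha hb]
  have hρh : ρ < 1/2 := by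
    by_contra hcon
    push_neg at hcon
    have h2m : 2*μ1 ≤ 4*μ1*ρ := by nlinarith
    have h1 : Real.sqrt ((μ1 + μ2) ^ 2 - 4 * μ1 * (μ2 - μ1)) < μ2 - μ1 := by linarith
    nlinarith [mul_nonneg (sub_nonneg.2 h1.le) hsnn,
      mul_pos (sub_pos.2 h1) (sub_pos.2 hμ12)]
  have hρ2 : ρ^2 < 1 := by nlinarith
  have hwp : 0 < μ2 - 2*μ1*ρ := by nlinarith
  have hhp : 0 < μ2 - 2*(μ1+μ2)*ρ + 3*μ1*ρ^2 := by nlinarith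
  refine ⟨hhp, div_pos (by positivity) hhp,
    div_pos (mul_pos (mul_pos two_pos (pow_pos hwp 4)) (by linarith)) hhp, ?_⟩
  -- eventual strict inequalities
  have ev1 : ∀ᶠ p : ℝ × ℝ in nhds ((0:ℝ),(0:ℝ)), 0 < 1/(μ2 - 2*μ1*ρ) + p.2 := by
    have hc : Continuous (fun p : ℝ × ℝ => 1/(μ2 - 2*μ1*ρ) + p.2) := by continuity
    have h0 : 0 < 1/(μ2 - 2*μ1*ρ) + ((0:ℝ),(0:ℝ)).2 := by
      show (0:ℝ) < 1/(μ2 - 2*μ1*ρ) + (0:ℝ)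
      simp only [add_zero]
      exact div_pos one_pos hwp
    exact (hc.tendsto _).eventually (eventually_gt_nhds h0)
  have ev2 : ∀ᶠ p : ℝ × ℝ in nhds ((0:ℝ),(0:ℝ)),
      1/(μ2 - 2*μ1*ρ) + p.2 < (1 - 2*ρ)/μ1 + p.1 := by
    have hc : Continuous (fun p : ℝ × ℝ => ((1 - 2*ρ)/μ1 + p.1) - (1/(μ2 - 2*μ1*ρ) + p.2)) := by
      continuity
    have h0 : 0 < ((1 - 2*ρ)/μ1 + ((0:ℝ),(0:ℝ)).1) - (1/(μ2 - 2*μ1*ρ) + ((0:ℝ),(0:ℝ)).2) := by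
      show (0:ℝ) < ((1 - 2*ρ)/μ1 + (0:ℝ)) - (1/(μ2 - 2*μ1*ρ) + (0:ℝ))
      simp only [add_zero]
      rw [show (1 - 2*ρ)/μ1 - 1/(μ2 - 2*μ1*ρ)
          = (4*μ1*ρ^2 - 2*(μ1+μ2)*ρ + (μ2 - μ1))/(μ1*(μ2 - 2*μ1*ρ)) from by
        rw [div_sub_div _ _ hμ1.ne' hwp.ne', div_eq_div_iff (by positivity) (by positivity)]; ring]
      exact div_pos hqpos (by positivity)
    have := (hc.tendsto ((0:ℝ),(0:ℝ))).eventually (eventually_gt_nhds h0)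
    filter_upwards [this] with p hp
    linarith [hp]
  have ev3 : ∀ᶠ p : ℝ × ℝ in nhds ((0:ℝ),(0:ℝ)),
      0 < (1 + μ1*((1 - 2*ρ)/μ1 + p.1)) - ρ*(1 + μ2*(1/(μ2 - 2*μ1*ρ) + p.2)) := by
    have hc : Continuous (fun p : ℝ × ℝ =>
        (1 + μ1*((1 - 2*ρ)/μ1 + p.1)) - ρ*(1 + μ2*(1/(μ2 - 2*μ1*ρ) + p.2))) := by continuity
    have h0 : 0 < (1 + μ1*((1 - 2*ρ)/μ1 + ((0:ℝ),(0:ℝ)).1))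
        - ρ*(1 + μ2*(1/(μ2 - 2*μ1*ρ) + ((0:ℝ),(0:ℝ)).2)) := by
      show (0:ℝ) < (1 + μ1*((1 - 2*ρ)/μ1 + (0:ℝ))) - ρ*(1 + μ2*(1/(μ2 - 2*μ1*ρ) + (0:ℝ)))
      simp only [add_zero]
      rw [show (1 + μ1*((1 - 2*ρ)/μ1)) - ρ*(1 + μ2*(1/(μ2 - 2*μ1*ρ)))
          = 2*(μ2 - 2*(μ1+μ2)*ρ + 3*μ1*ρ^2)/(μ2 - 2*μ1*ρ) from by
          have := hwp.ne'; rw [eq_comm, ← sub_eq_zero]; field_simp; ring]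
      exact div_pos (by linarith) hwp
    exact (hc.tendsto _).eventually (eventually_gt_nhds h0)
  have ev4 : ∀ᶠ p : ℝ × ℝ in nhds ((0:ℝ),(0:ℝ)),
      0 < ((1 - 2*ρ)/μ1 + p.1)*(1 + μ2*(1/(μ2 - 2*μ1*ρ) + p.2))
        - ρ*(1/(μ2 - 2*μ1*ρ) + p.2)*(1 + μ1*((1 - 2*ρ)/μ1 + p.1)) := by
    have hc : Continuous (fun p : ℝ × ℝ =>
        ((1 - 2*ρ)/μ1 + p.1)*(1 + μ2*(1/(μ2 - 2*μ1*ρ) + p.2))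
        - ρ*(1/(μ2 - 2*μ1*ρ) + p.2)*(1 + μ1*((1 - 2*ρ)/μ1 + p.1))) := by continuity
    have h0 : 0 < ((1 - 2*ρ)/μ1 + ((0:ℝ),(0:ℝ)).1)*(1 + μ2*(1/(μ2 - 2*μ1*ρ) + ((0:ℝ),(0:ℝ)).2))
        - ρ*(1/(μ2 - 2*μ1*ρ) + ((0:ℝ),(0:ℝ)).2)*(1 + μ1*((1 - 2*ρ)/μ1 + ((0:ℝ),(0:ℝ)).1)) := by
      show (0:ℝ) < ((1 - 2*ρ)/μ1 + (0:ℝ))*(1 + μ2*(1/(μ2 - 2*μ1*ρ) + (0:ℝ)))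
        - ρ*(1/(μ2 - 2*μ1*ρ) + (0:ℝ))*(1 + μ1*((1 - 2*ρ)/μ1 + (0:ℝ)))
      simp only [add_zero]
      rw [show ((1 - 2*ρ)/μ1)*(1 + μ2*(1/(μ2 - 2*μ1*ρ)))
          - ρ*(1/(μ2 - 2*μ1*ρ))*(1 + μ1*((1 - 2*ρ)/μ1))
          = 2*(μ2 - 2*(μ1+μ2)*ρ + 3*μ1*ρ^2)/(μ1*(μ2 - 2*μ1*ρ)) from by
          have := hwp.ne'; rw [eq_comm, ← sub_eq_zero]; field_simp; ring]
      exact div_pos (by linarith) (by positivity)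
    exact (hc.tendsto _).eventually (eventually_gt_nhds h0)
  -- the key eventual identity
  have hkey : (fun p : ℝ × ℝ =>
      gfun ρ μ1 μ2 ((1 - 2 * ρ) / μ1 + p.1) (1 / (μ2 - 2 * μ1 * ρ) + p.2) -
            (4 * (μ2 + (1 - 2 * ρ) * μ1) +
              2 * μ1 ^ 3 * (μ2 - 2 * μ1 * ρ) /
                  (μ2 - 2 * (μ1 + μ2) * ρ + 3 * μ1 * ρ ^ 2) / 2 * p.1 ^ 2 -
              -2 * ρ * μ1 ^ 2 * (μ2 - 2 * μ1 * ρ) ^ 2 /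
                  (μ2 - 2 * (μ1 + μ2) * ρ + 3 * μ1 * ρ ^ 2) * p.1 * p.2 +
              2 * (μ2 - 2 * μ1 * ρ) ^ 4 * (1 - 2 * ρ) /
                  (μ2 - 2 * (μ1 + μ2) * ρ + 3 * μ1 * ρ ^ 2) / 2 * p.2 ^ 2))
      =ᶠ[nhds ((0:ℝ),(0:ℝ))] (fun p : ℝ × ℝ =>
        (((((-1)*μ1^4*μ2^2 + (4)*μ1^5*μ2*ρ + (-4)*μ1^6*ρ^2)/(μ1*(μ2 - 2*μ1*ρ)^2*(μ2 - 2*(μ1+μ2)*ρ + 3*μ1*ρ^2)))*p.1^3 + (((-2)*μ1^3*μ2^3*ρ + (13)*μ1^4*μ2^2*ρ^2 + (-28)*μ1^5*μ2*ρ^3 + (20)*μ1^6*ρ^4)/(μ1*(μ2 - 2*μ1*ρ)^2*(μ2 - 2*(μ1+μ2)*ρ + 3*μ1*ρ^2)))*p.1^2*p.2 + (((-1)*μ1^2*μ2^4*ρ^2 + (10)*μ1^3*μ2^3*ρ^3 + (-36)*μ1^4*μ2^2*ρ^4 + (56)*μ1^5*μ2*ρ^5 + (-32)*μ1^6*ρ^6)/(μ1*(μ2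 - 2*μ1*ρ)^2*(μ2 - 2*(μ1+μ2)*ρ + 3*μ1*ρ^2)))*p.1*p.2^2 + (((-1)*μ2^6 + (4)*μ2^6*ρ + (-4)*μ2^6*ρ^2 + (12)*μ1*μ2^5*ρ + (-46)*μ1*μ2^5*ρ^2 + (44)*μ1*μ2^5*ρ^3 + (-60)*μ1^2*μ2^4*ρ^2 + (220)*μ1^2*μ2^4*ρ^3 + (-200)*μ1^2*μ2^4*ρ^4 + (160)*μ1^3*μ2^3*ρ^3 + (-560)*μ1^3*μ2^3*ρ^4 + (480)*μ1^3*μ2^3*ρ^5 + (-240)*μ1^4*μ2^2*ρ^4 + (800)*μ1^4*μ2^2*ρ^5 + (-640)*μ1^4*μ2^2*ρ^6 + (192)*μ1^5*μ2*ρ^5 + (-608)*μ1^5*μ2*ρ^6 + (448)*μ1^5*μ2*ρ^7 + (-64)*μ1^6*ρ^6 + (192)*μ1^6*ρ^7 + (-128)*μ1^6*ρ^8)/(μ1*(μ2 - 2*μ1*ρ)^2*(μ2 - 2*(μ1+μ2)*ρ + 3*μ1*ρ^2)))*p.2^3 + (((0:ℝ))/(μ1*(μ2 - 2*μ1*ρ)^2*(μ2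 - 2*(μ1+μ2)*ρ + 3*μ1*ρ^2)))*p.1^4 + (((-1)*μ1^4*μ2^3 + (6)*μ1^5*μ2^2*ρ + (-12)*μ1^6*μ2*ρ^2 + (8)*μ1^7*ρ^3)/(μ1*(μ2 - 2*μ1*ρ)^2*(μ2 - 2*(μ1+μ2)*ρ + 3*μ1*ρ^2)))*p.1^3*p.2 + (((-2)*μ1^3*μ2^4*ρ + (17)*μ1^4*μ2^3*ρ^2 + (-54)*μ1^5*μ2^2*ρ^3 + (76)*μ1^6*μ2*ρ^4 + (-40)*μ1^7*ρ^5)/(μ1*(μ2 - 2*μ1*ρ)^2*(μ2 - 2*(μ1+μ2)*ρ + 3*μ1*ρ^2)))*p.1^2*p.2^2 + (((-1)*μ1*μ2^6 + (2)*μ1*μ2^6*ρ + (12)*μ1^2*μ2^5*ρ + (-24)*μ1^2*μ2^5*ρ^2 + (-60)*μ1^3*μ2^4*ρ^2 + (122)*μ1^3*μ2^4*ρ^3 + (160)*μ1^4*μ2^3*ρ^3 + (-336)*μ1^4*μ2^3*ρ^4 + (-240)*μ1^5*μ2^2*ρ^4 + (528)*μ1^5*μ2^2*ρ^5 + (192)*μ1^6*μ2*ρ^5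 + (-448)*μ1^6*μ2*ρ^6 + (-64)*μ1^7*ρ^6 + (160)*μ1^7*ρ^7)/(μ1*(μ2 - 2*μ1*ρ)^2*(μ2 - 2*(μ1+μ2)*ρ + 3*μ1*ρ^2)))*p.1*p.2^3 + (((1)*μ1*μ2^6*ρ^2 + (-2)*μ1*μ2^6*ρ^3 + (-12)*μ1^2*μ2^5*ρ^3 + (24)*μ1^2*μ2^5*ρ^4 + (60)*μ1^3*μ2^4*ρ^4 + (-120)*μ1^3*μ2^4*ρ^5 + (-160)*μ1^4*μ2^3*ρ^5 + (320)*μ1^4*μ2^3*ρ^6 + (240)*μ1^5*μ2^2*ρ^6 + (-480)*μ1^5*μ2^2*ρ^7 + (-192)*μ1^6*μ2*ρ^7 + (384)*μ1^6*μ2*ρ^8 + (64)*μ1^7*ρ^8 + (-128)*μ1^7*ρ^9)/(μ1*(μ2 - 2*μ1*ρ)^2*(μ2 - 2*(μ1+μ2)*ρ + 3*μ1*ρ^2)))*p.2^4)) * (((1 / (μ2 - 2 * μ1 * ρ) + p.2) * ((1 - 2 * ρ) / μ1 + p.1 - ρ ^ 2 * (1 / (μ2 - 2 * μ1 * ρ)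 + p.2))))⁻¹) := by
    filter_upwards [ev1, ev2, ev3, ev4] with p h1 h2 h3 h4
    have hDpos : 0 < (1 / (μ2 - 2 * μ1 * ρ) + p.2) * ((1 - 2 * ρ) / μ1 + p.1 - ρ ^ 2 * (1 / (μ2 - 2 * μ1 * ρ) + p.2)) := by
      apply mul_pos h1
      nlinarith [h1, h2, hρ2, mul_pos h1 (sub_pos.2 hρ2)]
    rw [gfun_eq ρ μ1 μ2 ((1 - 2 * ρ) / μ1 + p.1) (1 / (μ2 - 2 * μ1 * ρ) + p.2)
      h1 h2 hρ2 (by linarith) (by linarith)]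
    rw [div_sub' (ne_of_gt hDpos)]
    rw [core_ident ρ μ1 μ2 p (ne_of_gt hμ1) (ne_of_gt hwp) (ne_of_gt hhp)]
    rw [div_eq_mul_inv]
  -- tendsto of the inverse denominator
  have hDc : Continuous (fun p : ℝ × ℝ => (1 / (μ2 - 2 * μ1 * ρ) + p.2) * ((1 - 2 * ρ) / μ1 + p.1 - ρ ^ 2 * (1 / (μ2 - 2 * μ1 * ρ) + p.2))) := by continuity
  have hD0 : ((1 / (μ2 - 2 * μ1 * ρ) + ((0:ℝ),(0:ℝ)).2) * ((1 - 2 * ρ) / μ1 + ((0:ℝ),(0:ℝ)).1 - ρ ^ 2 * (1 / (μ2 - 2 * μ1 * ρ) + ((0:ℝ),(0:ℝ)).2))) ≠ 0 := by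
    show (1/(μ2 - 2*μ1*ρ) + (0:ℝ)) * ((1 - 2*ρ)/μ1 + (0:ℝ) - ρ^2*(1/(μ2 - 2*μ1*ρ) + (0:ℝ))) ≠ 0
    simp only [add_zero]
    have hs0 : (0:ℝ) < 1/(μ2 - 2*μ1*ρ) := div_pos one_pos hwp
    have ht0 : 0 < (1 - 2*ρ)/μ1 - 1/(μ2 - 2*μ1*ρ) := by
      rw [show (1 - 2*ρ)/μ1 - 1/(μ2 - 2*μ1*ρ)
          = (4*μ1*ρ^2 - 2*(μ1+μ2)*ρ + (μ2 - μ1))/(μ1*(μ2 - 2*μ1*ρ)) from by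
        rw [div_sub_div _ _ hμ1.ne' hwp.ne', div_eq_div_iff (by positivity) (by positivity)]; ring]
      exact div_pos hqpos (mul_pos hμ1 hwp)
    exact ne_of_gt (mul_pos hs0 (by nlinarith [hs0, ht0, hρ2, mul_pos hs0 (sub_pos.2 hρ2)]))
  have hinv : (fun p : ℝ × ℝ => (((1 / (μ2 - 2 * μ1 * ρ) + p.2) * ((1 - 2 * ρ) / μ1 + p.1 - ρ ^ 2 * (1 / (μ2 - 2 * μ1 * ρ) + p.2))))⁻¹) =O[nhds ((0:ℝ),(0:ℝ))] (fun _ : ℝ × ℝ => (1:ℝ)) :=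
    Filter.Tendsto.isBigO_one ℝ (((hDc.tendsto ((0:ℝ),(0:ℝ))).inv₀ hD0))
  have hsum := sum_o (((-1)*μ1^4*μ2^2 + (4)*μ1^5*μ2*ρ + (-4)*μ1^6*ρ^2)/(μ1*(μ2 - 2*μ1*ρ)^2*(μ2 - 2*(μ1+μ2)*ρ + 3*μ1*ρ^2))) (((-2)*μ1^3*μ2^3*ρ + (13)*μ1^4*μ2^2*ρ^2 + (-28)*μ1^5*μ2*ρ^3 + (20)*μ1^6*ρ^4)/(μ1*(μ2 - 2*μ1*ρ)^2*(μ2 - 2*(μ1+μ2)*ρ + 3*μ1*ρ^2))) (((-1)*μ1^2*μ2^4*ρ^2 + (10)*μ1^3*μ2^3*ρ^3 + (-36)*μ1^4*μ2^2*ρ^4 + (56)*μ1^5*μ2*ρ^5 + (-32)*μ1^6*ρ^6)/(μ1*(μ2 - 2*μ1*ρ)^2*(μ2 - 2*(μ1+μ2)*ρ + 3*μ1*ρ^2))) (((-1)*μ2^6 + (4)*μ2^6*ρ + (-4)*μ2^6*ρ^2 + (12)*μ1*μ2^5*ρ + (-46)*μ1*μ2^5*ρ^2 + (44)*μ1*μ2^5*ρ^3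 + (-60)*μ1^2*μ2^4*ρ^2 + (220)*μ1^2*μ2^4*ρ^3 + (-200)*μ1^2*μ2^4*ρ^4 + (160)*μ1^3*μ2^3*ρ^3 + (-560)*μ1^3*μ2^3*ρ^4 + (480)*μ1^3*μ2^3*ρ^5 + (-240)*μ1^4*μ2^2*ρ^4 + (800)*μ1^4*μ2^2*ρ^5 + (-640)*μ1^4*μ2^2*ρ^6 + (192)*μ1^5*μ2*ρ^5 + (-608)*μ1^5*μ2*ρ^6 + (448)*μ1^5*μ2*ρ^7 + (-64)*μ1^6*ρ^6 + (192)*μ1^6*ρ^7 + (-128)*μ1^6*ρ^8)/(μ1*(μ2 - 2*μ1*ρ)^2*(μ2 - 2*(μ1+μ2)*ρ + 3*μ1*ρ^2))) (((0:ℝ))/(μ1*(μ2 - 2*μ1*ρ)^2*(μ2 - 2*(μ1+μ2)*ρ + 3*μ1*ρ^2))) (((-1)*μ1^4*μ2^3 + (6)*μ1^5*μ2^2*ρ + (-12)*μ1^6*μ2*ρ^2 + (8)*μ1^7*ρ^3)/(μ1*(μ2 - 2*μ1*ρ)^2*(μ2 - 2*(μ1+μ2)*ρ + 3*μ1*ρ^2)))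 (((-2)*μ1^3*μ2^4*ρ + (17)*μ1^4*μ2^3*ρ^2 + (-54)*μ1^5*μ2^2*ρ^3 + (76)*μ1^6*μ2*ρ^4 + (-40)*μ1^7*ρ^5)/(μ1*(μ2 - 2*μ1*ρ)^2*(μ2 - 2*(μ1+μ2)*ρ + 3*μ1*ρ^2))) (((-1)*μ1*μ2^6 + (2)*μ1*μ2^6*ρ + (12)*μ1^2*μ2^5*ρ + (-24)*μ1^2*μ2^5*ρ^2 + (-60)*μ1^3*μ2^4*ρ^2 + (122)*μ1^3*μ2^4*ρ^3 + (160)*μ1^4*μ2^3*ρ^3 + (-336)*μ1^4*μ2^3*ρ^4 + (-240)*μ1^5*μ2^2*ρ^4 + (528)*μ1^5*μ2^2*ρ^5 + (192)*μ1^6*μ2*ρ^5 + (-448)*μ1^6*μ2*ρ^6 + (-64)*μ1^7*ρ^6 + (160)*μ1^7*ρ^7)/(μ1*(μ2 - 2*μ1*ρ)^2*(μ2 - 2*(μ1+μ2)*ρ + 3*μ1*ρ^2))) (((1)*μ1*μ2^6*ρ^2 + (-2)*μ1*μ2^6*ρ^3 + (-12)*μ1^2*μ2^5*ρ^3 + (24)*μ1^2*μ2^5*ρ^4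 + (60)*μ1^3*μ2^4*ρ^4 + (-120)*μ1^3*μ2^4*ρ^5 + (-160)*μ1^4*μ2^3*ρ^5 + (320)*μ1^4*μ2^3*ρ^6 + (240)*μ1^5*μ2^2*ρ^6 + (-480)*μ1^5*μ2^2*ρ^7 + (-192)*μ1^6*μ2*ρ^7 + (384)*μ1^6*μ2*ρ^8 + (64)*μ1^7*ρ^8 + (-128)*μ1^7*ρ^9)/(μ1*(μ2 - 2*μ1*ρ)^2*(μ2 - 2*(μ1+μ2)*ρ + 3*μ1*ρ^2)))
  have hbig := hsum.mul_isBigO hinv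
  have hfin : (fun p : ℝ × ℝ =>
      (((((-1)*μ1^4*μ2^2 + (4)*μ1^5*μ2*ρ + (-4)*μ1^6*ρ^2)/(μ1*(μ2 - 2*μ1*ρ)^2*(μ2 - 2*(μ1+μ2)*ρ + 3*μ1*ρ^2)))*p.1^3 + (((-2)*μ1^3*μ2^3*ρ + (13)*μ1^4*μ2^2*ρ^2 + (-28)*μ1^5*μ2*ρ^3 + (20)*μ1^6*ρ^4)/(μ1*(μ2 - 2*μ1*ρ)^2*(μ2 - 2*(μ1+μ2)*ρ + 3*μ1*ρ^2)))*p.1^2*p.2 + (((-1)*μ1^2*μ2^4*ρ^2 + (10)*μ1^3*μ2^3*ρ^3 + (-36)*μ1^4*μ2^2*ρ^4 + (56)*μ1^5*μ2*ρ^5 + (-32)*μ1^6*ρ^6)/(μ1*(μ2 - 2*μ1*ρ)^2*(μ2 - 2*(μ1+μ2)*ρ + 3*μ1*ρ^2)))*p.1*p.2^2 + (((-1)*μ2^6 + (4)*μ2^6*ρ + (-4)*μ2^6*ρ^2 + (12)*μ1*μ2^5*ρ + (-46)*μ1*μ2^5*ρ^2 + (44)*μ1*μ2^5*ρ^3 +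 (-60)*μ1^2*μ2^4*ρ^2 + (220)*μ1^2*μ2^4*ρ^3 + (-200)*μ1^2*μ2^4*ρ^4 + (160)*μ1^3*μ2^3*ρ^3 + (-560)*μ1^3*μ2^3*ρ^4 + (480)*μ1^3*μ2^3*ρ^5 + (-240)*μ1^4*μ2^2*ρ^4 + (800)*μ1^4*μ2^2*ρ^5 + (-640)*μ1^4*μ2^2*ρ^6 + (192)*μ1^5*μ2*ρ^5 + (-608)*μ1^5*μ2*ρ^6 + (448)*μ1^5*μ2*ρ^7 + (-64)*μ1^6*ρ^6 + (192)*μ1^6*ρ^7 + (-128)*μ1^6*ρ^8)/(μ1*(μ2 - 2*μ1*ρ)^2*(μ2 - 2*(μ1+μ2)*ρ + 3*μ1*ρ^2)))*p.2^3 + (((0:ℝ))/(μ1*(μ2 - 2*μ1*ρ)^2*(μ2 - 2*(μ1+μ2)*ρ + 3*μ1*ρ^2)))*p.1^4 + (((-1)*μ1^4*μ2^3 + (6)*μ1^5*μ2^2*ρ + (-12)*μ1^6*μ2*ρ^2 + (8)*μ1^7*ρ^3)/(μ1*(μ2 - 2*μ1*ρ)^2*(μ2 - 2*(μ1+μ2)*ρ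 + 3*μ1*ρ^2)))*p.1^3*p.2 + (((-2)*μ1^3*μ2^4*ρ + (17)*μ1^4*μ2^3*ρ^2 + (-54)*μ1^5*μ2^2*ρ^3 + (76)*μ1^6*μ2*ρ^4 + (-40)*μ1^7*ρ^5)/(μ1*(μ2 - 2*μ1*ρ)^2*(μ2 - 2*(μ1+μ2)*ρ + 3*μ1*ρ^2)))*p.1^2*p.2^2 + (((-1)*μ1*μ2^6 + (2)*μ1*μ2^6*ρ + (12)*μ1^2*μ2^5*ρ + (-24)*μ1^2*μ2^5*ρ^2 + (-60)*μ1^3*μ2^4*ρ^2 + (122)*μ1^3*μ2^4*ρ^3 + (160)*μ1^4*μ2^3*ρ^3 + (-336)*μ1^4*μ2^3*ρ^4 + (-240)*μ1^5*μ2^2*ρ^4 + (528)*μ1^5*μ2^2*ρ^5 + (192)*μ1^6*μ2*ρ^5 + (-448)*μ1^6*μ2*ρ^6 + (-64)*μ1^7*ρ^6 + (160)*μ1^7*ρ^7)/(μ1*(μ2 - 2*μ1*ρ)^2*(μ2 - 2*(μ1+μ2)*ρ + 3*μ1*ρ^2)))*p.1*p.2^3 + (((1)*μ1*μ2^6*ρ^2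 + (-2)*μ1*μ2^6*ρ^3 + (-12)*μ1^2*μ2^5*ρ^3 + (24)*μ1^2*μ2^5*ρ^4 + (60)*μ1^3*μ2^4*ρ^4 + (-120)*μ1^3*μ2^4*ρ^5 + (-160)*μ1^4*μ2^3*ρ^5 + (320)*μ1^4*μ2^3*ρ^6 + (240)*μ1^5*μ2^2*ρ^6 + (-480)*μ1^5*μ2^2*ρ^7 + (-192)*μ1^6*μ2*ρ^7 + (384)*μ1^6*μ2*ρ^8 + (64)*μ1^7*ρ^8 + (-128)*μ1^7*ρ^9)/(μ1*(μ2 - 2*μ1*ρ)^2*(μ2 - 2*(μ1+μ2)*ρ + 3*μ1*ρ^2)))*p.2^4)) * (((1 / (μ2 - 2 * μ1 * ρ) + p.2) * ((1 - 2 * ρ) / μ1 + p.1 - ρ ^ 2 * (1 / (μ2 - 2 * μ1 * ρ) + p.2))))⁻¹)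
      =o[nhds ((0:ℝ),(0:ℝ))] (fun p : ℝ × ℝ => p.1 ^ 2 + p.2 ^ 2) := by
    refine hbig.congr (fun p => rfl) (fun p => ?_)
    simp
  exact hfin.congr' (Filter.EventuallyEq.symm hkey) (Filter.EventuallyEq.rfl)
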